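/- Let G be a finite group of order p^k for a prime p, and let N be a normal subgroup of G of order p^a such that N contains exactly one non-central G-conjugacy class. Then p = 2, N is abelian, and a ≤ (k+1)/2. -/

import Mathlib

private lemma pow_add_pow_aux {p a b c : ℕ} (hp : p.Prime)
    (h : p ^ a = p ^ b + p ^ c) (hc : 0 < c) : p = 2 ∧ b = c ∧ a = b + 1 := by
  have hp1 : 1 < p := hp.one_lt
  have hab : b < a := by
    have : p ^ b < p ^ a := by
      have := Nat.pow_pos (n := c) (by omega : 0 < p)
      omega
    exact (Nat.pow_lt_pow_iff_right hp1).mp this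
  have hac : c < a := by
    have : p ^ c < p ^ a := by
      have := Nat.pow_pos (n := b) (by omega : 0 < p)
      omega
    exact (Nat.pow_lt_pow_iff_right hp1).mp this
  have hbc : b = c := by
    rcases Nat.lt_trichotomy b c with hlt | heq | hgt
    · exfalso
      have h1 : p ^ (b + 1) ∣ p ^ a := Nat.pow_dvd_pow p (by omega)
      have h2 : p ^ (b + 1) ∣ p ^ c := Nat.pow_dvd_pow p (by omega)
      have h3 : p ^ (b + 1) ∣ p ^ b := by
        have : p ^ b = p ^ a - p ^ c := by omega
        rw [this]; exact Nat.dvd_sub h1 h2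
      have h4 := Nat.le_of_dvd (Nat.pow_pos (n := b) (by omega)) h3
      have h5 : p ^ b < p ^ (b + 1) := Nat.pow_lt_pow_right hp1 (by omega)
      omega
    · exact heq
    · exfalso
      have h1 : p ^ (c + 1) ∣ p ^ a := Nat.pow_dvd_pow p (by omega)
      have h2 : p ^ (c + 1) ∣ p ^ b := Nat.pow_dvd_pow p (by omega)
      have h3 : p ^ (c + 1) ∣ p ^ c := by
        have : p ^ c = p ^ a - p ^ b := by omega
        rw [this]; exact Nat.dvd_sub h1 h2
      have h4 := Nat.le_of_dvd (Nat.pow_pos (n := c) (by omega)) h3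
      have h5 : p ^ c < p ^ (c + 1) := Nat.pow_lt_pow_right hp1 (by omega)
      omega
  subst hbc
  have h2 : p ^ a = 2 * p ^ b := by omega
  have hdvd : p ^ b * p ∣ p ^ b * 2 := by
    have : p ^ (b + 1) ∣ p ^ a := Nat.pow_dvd_pow p (by omega)
    rw [h2] at this
    rw [pow_succ] at this
    calc p ^ b * p ∣ 2 * p ^ b := this
    _ = p ^ b * 2 := by ring
  have hpd : p ∣ 2 := (Nat.mul_dvd_mul_iff_left (Nat.pow_pos (n := b) (by omega))).mp hdvd
  have hp2 : p = 2 := (Nat.prime_dvd_prime_iff_eq hp Nat.prime_two).mp hpd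
  refine ⟨hp2, rfl, ?_⟩
  subst hp2
  have : (2:ℕ) ^ a = 2 ^ (b + 1) := by rw [pow_succ]; omega
  exact Nat.pow_right_injective (le_refl 2) this

/-- **Theorem 3.1.3.** Let `|G| = p^k` with `p` prime and let `N ⊴ G` with
`|N| = p^a` contain exactly one non-central `G`-conjugacy class. Then `p = 2`, `N` is
abelian, and `a ≤ (k+1)/2`. -/
theorem prime_power_group_one_noncentral_class
    {G : Type*} [Group G] [Finite G] (p k a : ℕ) (hp : p.Prime)
    (hG : Nat.card G = p ^ k) (N : Subgroup G) (hN : N.Normal)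
    (hNcard : Nat.card N = p ^ a)
    (hcl : {C : Set G | ∃ x : G, x ∈ N ∧ x ∉ Subgroup.center G ∧ C = conjugatesOf x}.ncard = 1) :
    p = 2 ∧ (∀ x ∈ N, ∀ y ∈ N, Commute x y) ∧ (a : ℚ) ≤ (k + 1) / 2 := by
  classical
  obtain ⟨C, hC⟩ := Set.ncard_eq_one.mp hcl
  have hCmem : C ∈ {C : Set G | ∃ x : G, x ∈ N ∧ x ∉ Subgroup.center G ∧ C = conjugatesOf x} := by
    rw [hC]; exact rfl
  obtain ⟨x, hxN, hxZ, hCx⟩ := hCmem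
  -- the unique class equals N \ Z(G)
  set D : Set G := (N : Set G) \ (Subgroup.center G : Set G) with hD
  have hconjsub : ∀ y : G, y ∈ N → y ∉ Subgroup.center G → conjugatesOf y ⊆ D := by
    intro y hyN hyZ z hz
    obtain ⟨g, hg⟩ := isConj_iff.mp hz
    constructor
    · rw [← hg]; exact hN.conj_mem y hyN g
    · intro hzZ
      apply hyZ
      have : g⁻¹ * z * g⁻¹⁻¹ ∈ Subgroup.center G :=
        (Subgroup.center G).normal_of_characteristic.conj_mem z hzZ g⁻¹
      rw [← hg] at this
      simpa [mul_assoc] using this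
  have hCeqD : C = D := by
    apply Set.eq_of_subset_of_subset
    · rw [hCx]; exact hconjsub x hxN hxZ
    · intro y hy
      have hmem : conjugatesOf y ∈ {C : Set G | ∃ x : G, x ∈ N ∧ x ∉ Subgroup.center G ∧ C = conjugatesOf x} :=
        ⟨y, hy.1, hy.2, rfl⟩
      rw [hC, Set.mem_singleton_iff] at hmem
      rw [← hmem]
      exact mem_conjugatesOf_self
  -- cardinalities
  set Z0 : Set G := (N : Set G) ∩ (Subgroup.center G : Set G) with hZ0
  have hsplit : (N : Set G) = Z0 ∪ D := (Set.inter_union_diff _ _).symm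
  have hdisj : Disjoint Z0 D := Set.disjoint_sdiff_inter.symm.mono_left le_rfl
  have hcards : (N : Set G).ncard = Z0.ncard + D.ncard := by
    rw [hsplit]
    exact Set.ncard_union_eq hdisj (Set.toFinite _) (Set.toFinite _)
  have hNncard : (N : Set G).ncard = p ^ a := by
    rw [← Nat.card_coe_set_eq, ← hNcard]
    rfl
  -- Z0 is (the carrier of) a subgroup of N, so its card is a power of p
  have hZ0card : Nat.card ↥(N ⊓ Subgroup.center G) = Z0.ncard := by
    rw [← Nat.card_coe_set_eq]
    rfl
  have hZ0dvd : Z0.ncard ∣ p ^ a := by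
    rw [← hZ0card, ← hNcard]
    exact Subgroup.card_dvd_of_le inf_le_left
  obtain ⟨b, hb, hbeq⟩ := (Nat.dvd_prime_pow hp).mp hZ0dvd
  -- D = conjugatesOf x has card a power of p, at least p
  haveI : Fintype G := Fintype.ofFinite G
  have horb : MulAction.orbit (ConjAct G) x = conjugatesOf x := by
    ext y
    rw [ConjAct.mem_orbit_conjAct]
    exact isConj_comm
  have hind : (MulAction.stabilizer (ConjAct G) x).index = D.ncard := by
    rw [MulAction.index_stabilizer, horb, ← hCx, hCeqD]
  have hindmul : (MulAction.stabilizer (ConjAct G) x).index *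
      Nat.card ↥(MulAction.stabilizer (ConjAct G) x) = Nat.card (ConjAct G) :=
    Subgroup.index_mul_card _
  have hcardConj : Nat.card (ConjAct G) = p ^ k := hG
  have hDdvd : D.ncard ∣ p ^ k := by
    rw [← hind, ← hcardConj, ← hindmul]
    exact Dvd.intro _ rfl
  obtain ⟨c, hcle, hceq⟩ := (Nat.dvd_prime_pow hp).mp hDdvd
  have hD2 : 1 < D.ncard := by
    rw [Set.one_lt_ncard_iff (Set.toFinite _)]
    have hx : x ∈ D := ⟨hxN, hxZ⟩
    obtain ⟨g, hg⟩ : ∃ g : G, g * x ≠ x * g := by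
      by_contra h
      push_neg at h
      exact hxZ (Subgroup.mem_center_iff.mpr h)
    refine ⟨g * x * g⁻¹, x, ?_, hx, ?_⟩
    · have : g * x * g⁻¹ ∈ conjugatesOf x := isConj_iff.mpr ⟨g, rfl⟩
      rw [← hCx, hCeqD] at this
      exact this
    · intro heq
      exact hg (mul_inv_eq_iff_eq_mul.mp heq)
  have hc0 : 0 < c := by
    rcases Nat.eq_zero_or_pos c with h0 | h
    · rw [h0, pow_zero] at hceq; omega
    · exact h
  -- the key arithmetic
  have hsum : p ^ a = p ^ b + p ^ c := by
    rw [← hbeq, ← hceq, ← hcards, hNncard]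
  obtain ⟨hp2, hbc, hab1⟩ := pow_add_pow_aux hp hsum hc0
  -- hence Z0.ncard = D.ncard
  have hZD : Z0.ncard = D.ncard := by rw [hbeq, hceq, hbc]
  -- commutativity
  have hcomm : ∀ y ∈ N, ∀ y' ∈ N, Commute y y' := by
    have key : ∀ y : G, y ∈ N → y ∉ Subgroup.center G → ∀ y' : G, y' ∈ D →
        ∃ z : G, z ∈ Subgroup.center G ∧ y' = y * z := by
      intro y hyN hyZ y' hy'
      set S : Set G := (fun t => y * t) '' Z0 with hS
      have hSsub : S ⊆ D := by
        rintro _ ⟨z, hz, rfl⟩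
        constructor
        · exact N.mul_mem hyN hz.1
        · intro hmem
          apply hyZ
          have : y * z * z⁻¹ ∈ Subgroup.center G :=
            (Subgroup.center G).mul_mem hmem ((Subgroup.center G).inv_mem hz.2)
          simpa [mul_assoc] using this
      have hScard : S.ncard = Z0.ncard :=
        Set.ncard_image_of_injective _ (mul_right_injective y)
      have hSeq : S = D := by
        apply Set.eq_of_subset_of_ncard_le hSsub _ (Set.toFinite _)
        rw [hScard, hZD]
      rw [← hSeq] at hy'
      obtain ⟨z, hz, hzz⟩ := hy'
      exact ⟨z, hz.2, hzz.symm⟩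
    intro y hyN y' hy'N
    by_cases hyZ : y ∈ Subgroup.center G
    · exact (Subgroup.mem_center_iff.mp hyZ y').symm
    by_cases hy'Z : y' ∈ Subgroup.center G
    · exact Subgroup.mem_center_iff.mp hy'Z y
    obtain ⟨z, hzZ, hzz⟩ := key y hyN hyZ y' ⟨hy'N, hy'Z⟩
    have hzc : ∀ g : G, g * z = z * g := Subgroup.mem_center_iff.mp hzZ
    show y * y' = y' * y
    rw [hzz, mul_assoc y z y, ← hzc y]
  refine ⟨hp2, hcomm, ?_⟩
  -- the bound
  have hcent : N ≤ Subgroup.centralizer {x} := by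
    intro n hn
    rw [Subgroup.mem_centralizer_iff]
    intro h hh
    rw [Set.mem_singleton_iff] at hh
    rw [hh]
    exact hcomm x hxN n hn
  have hNdvd : p ^ a ∣ Nat.card ↥(Subgroup.centralizer ({x} : Set G)) := by
    rw [← hNcard]
    exact Subgroup.card_dvd_of_le hcent
  have hstab : Nat.card ↥(Subgroup.centralizer ({x} : Set G)) =
      Nat.card ↥(MulAction.stabilizer (ConjAct G) x) :=
    Subgroup.nat_card_centralizer_nat_card_stabilizer x
  -- p^c * card stabilizer = p^k, p^a ∣ card stabilizer
  have hkey : p ^ c * Nat.card ↥(MulAction.stabilizer (ConjAct G) x) = p ^ k := by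
    rw [← hceq, ← hind, hindmul, hcardConj]
  have hdvd2 : p ^ c * p ^ a ∣ p ^ k := by
    rw [← hkey]
    exact Nat.mul_dvd_mul_left _ (hstab ▸ hNdvd)
  rw [← pow_add] at hdvd2
  have hle : c + a ≤ k := by
    have := Nat.le_of_dvd (by positivity) hdvd2
    exact (Nat.pow_le_pow_iff_right hp.one_lt).mp this
  -- a = b + 1, b = c, so c = a - 1, hence 2a - 1 ≤ k, i.e. 2a ≤ k + 1
  have h2a : 2 * a ≤ k + 1 := by omega
  have : (2 : ℚ) * a ≤ k + 1 := by exact_mod_cast h2a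
  linarith
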